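/- Let G and H be finite simple graphs, let S be a minimum dominating set (γ-set) of G, and let h ∈ V(H) be a vertex adjacent to every other vertex of H (so {h} is a dominating set of H). Then D = S × {h} is a dominating set of the lexicographic product G∘H, and no dominating set of G∘H has cardinality less than |S|; in particular γ(G∘H) = γ(G). -/

import Mathlib

open Finset

variable {α β : Type*}

/-- `D` is a dominating set of `G`: every vertex outside `D` has a neighbor in `D`. -/
def IsDomSet (G : SimpleGraph α) (D : Finset α) : Prop :=
  ∀ v ∉ D, ∃ u ∈ D, G.Adj u v

/-- The domination number `γ(G)`: minimum cardinality of a dominating set. -/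
noncomputable def domNum (G : SimpleGraph α) : ℕ :=
  sInf {n | ∃ D : Finset α, IsDomSet G D ∧ D.card = n}

/-- The degree of vertex `v` in `G`. -/
noncomputable def vdeg (G : SimpleGraph α) (v : α) : ℕ :=
  Nat.card (G.neighborSet v)

/-- The (domination) cover number of a set of vertices `A`: the sum of degrees. -/
noncomputable def coverNum (G : SimpleGraph α) (A : Finset α) : ℕ :=
  ∑ v ∈ A, vdeg G v

/-- `D` is a minimum dominating set (γ-set) of `G`. -/
def IsGammaSet (G : SimpleGraph α) (D : Finset α) : Prop :=
  IsDomSet G D ∧ D.card = domNum G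

/-- The lexicographic product `G ∘ H` of two simple graphs. -/
def lexProd (G : SimpleGraph α) (H : SimpleGraph β) : SimpleGraph (α × β) where
  Adj a b := G.Adj a.1 b.1 ∨ (a.1 = b.1 ∧ H.Adj a.2 b.2)
  symm := by
    constructor
    rintro a b (h | ⟨h1, h2⟩)
    · exact Or.inl h.symm
    · exact Or.inr ⟨h1.symm, h2.symm⟩
  loopless := by
    constructor
    rintro a (h | ⟨_, h⟩)
    · exact G.loopless.irrefl _ h
    · exact H.loopless.irrefl _ h

/-- If `S` is a minimum dominating set of `G` and `h ∈ V(H)` dominates all of `H`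
(it is adjacent to every other vertex of `H`), then `D = S × {h}` is a dominating
set of `G ∘ H`, no dominating set of `G ∘ H` has fewer than `|S|` vertices, and
`γ(G ∘ H) = γ(G)`. -/
theorem lexProd_domSet_of_universal_vertex [Fintype α] [Fintype β]
    (G : SimpleGraph α) (H : SimpleGraph β)
    (S : Finset α) (hS : IsGammaSet G S)
    (h : β) (hh : ∀ x : β, x ≠ h → H.Adj h x) :
    IsDomSet (lexProd G H) (S ×ˢ {h}) ∧
    (∀ D' : Finset (α × β), IsDomSet (lexProd G H) D' → S.card ≤ D'.card) ∧
    domNum (lexProd G H) = domNum G := by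
  classical
  obtain ⟨hSdom, hScard⟩ := hS
  have hdom : IsDomSet (lexProd G H) (S ×ˢ {h}) := by
    rintro ⟨a, x⟩ hax
    by_cases ha : a ∈ S
    · refine ⟨(a, h), by simp [ha], Or.inr ⟨rfl, hh x ?_⟩⟩
      rintro rfl
      exact hax (by simp [ha])
    · obtain ⟨u, hu, huadj⟩ := hSdom a ha
      exact ⟨(u, h), by simp [hu], Or.inl huadj⟩
  have hlow : ∀ D' : Finset (α × β), IsDomSet (lexProd G H) D' → S.card ≤ D'.card := by
    intro D' hD'
    have hA : IsDomSet G (D'.image Prod.fst) := by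
      intro v hv
      have hvh : (v, h) ∉ D' := fun hc => hv (Finset.mem_image_of_mem _ hc)
      obtain ⟨⟨u, y⟩, huy, hadj⟩ := hD' (v, h) hvh
      rcases hadj with hadj | ⟨heq, _⟩
      · exact ⟨u, Finset.mem_image_of_mem _ huy, hadj⟩
      · exact absurd (Finset.mem_image_of_mem Prod.fst huy : u ∈ D'.image Prod.fst) (by simp only at heq; rw [heq]; exact hv)
    calc S.card = domNum G := hScard
      _ ≤ (D'.image Prod.fst).card := Nat.sInf_le ⟨_, hA, rfl⟩
      _ ≤ D'.card := Finset.card_image_le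
  refine ⟨hdom, hlow, le_antisymm ?_ ?_⟩
  · calc domNum (lexProd G H) ≤ (S ×ˢ ({h} : Finset β)).card :=
        Nat.sInf_le ⟨_, hdom, rfl⟩
      _ = S.card := by simp
      _ = domNum G := hScard
  · refine le_csInf ⟨(S ×ˢ ({h} : Finset β)).card, _, hdom, rfl⟩ ?_
    rintro n ⟨D', hD', rfl⟩
    exact hScard ▸ hlow D' hD'
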